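/- Under the same hypotheses (Gaussian tail bound in direction u, Hamiltonian dynamics), if 0 ≤ T ≤ 1/(6√M), then for every t ∈ [0,T]: |u·p_t| ≤ (3/2)√M |u·q₀| + (3/2)|u·p₀| + (3/2) b/√M. -/

import Mathlib

open Real
open scoped InnerProductSpace

/-- upper bound on the component of the momentum in direction `u`
over a short time interval, under the two-sided Gaussian tail bound. -/
theorem hmc_projected_momentum_upper_bound {d : ℕ}
    (U : EuclideanSpace ℝ (Fin d) → ℝ)
    (gU : EuclideanSpace ℝ (Fin d) → EuclideanSpace ℝ (Fin d))
    (hU : ∀ x, HasGradientAt U (gU x) x)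
    (u : EuclideanSpace ℝ (Fin d)) (hu : ‖u‖ = 1)
    (m M b : ℝ) (hm : 0 < m) (hmM : m ≤ M) (hb : 0 ≤ b)
    (htail : ∀ x, min (m * ⟪u, x⟫_ℝ) (M * ⟪u, x⟫_ℝ) - b ≤ ⟪u, gU x⟫_ℝ ∧
      ⟪u, gU x⟫_ℝ ≤ max (m * ⟪u, x⟫_ℝ) (M * ⟪u, x⟫_ℝ) + b)
    (q p : ℝ → EuclideanSpace ℝ (Fin d))
    (hq : ∀ t, HasDerivAt q (p t) t)
    (hp : ∀ t, HasDerivAt p (-gU (q t)) t)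
    (T : ℝ) (hT0 : 0 ≤ T) (hT : T ≤ 1 / (6 * Real.sqrt M)) :
    ∀ t ∈ Set.Icc (0:ℝ) T,
      |⟪u, p t⟫_ℝ| ≤ (3/2) * Real.sqrt M * |⟪u, q 0⟫_ℝ|
        + (3/2) * |⟪u, p 0⟫_ℝ| + (3/2) * b / Real.sqrt M := by
  intro t ht
  have hM : (0:ℝ) < M := lt_of_lt_of_le hm hmM
  set s := Real.sqrt M with hs
  have hs0 : 0 < s := Real.sqrt_pos.mpr hM
  have hsM : s * s = M := Real.mul_self_sqrt hM.le
  -- gradient projection bound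
  have hgrad : ∀ x, |⟪u, gU x⟫_ℝ| ≤ M * |⟪u, x⟫_ℝ| + b := by
    intro x
    obtain ⟨h1, h2⟩ := htail x
    set I := ⟪u, x⟫_ℝ
    rcases le_or_gt 0 I with hI | hI
    · rw [abs_le]
      constructor
      · have : min (m * I) (M * I) = m * I := min_eq_left (by nlinarith)
        rw [this] at h1
        rw [abs_of_nonneg hI]; nlinarith
      · have : max (m * I) (M * I) = M * I := max_eq_right (by nlinarith)
        rw [this] at h2
        rw [abs_of_nonneg hI]; nlinarith
    · rw [abs_le]
      constructor
      · have : min (m * I) (M * I) = M * I := min_eq_right (by nlinarith)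
        rw [this] at h1
        rw [abs_of_neg hI]; nlinarith
      · have : max (m * I) (M * I) = m * I := max_eq_left (by nlinarith)
        rw [this] at h2
        rw [abs_of_neg hI]; nlinarith
  -- scalar derivatives
  have hqd : ∀ τ, HasDerivAt (fun τ => ⟪u, q τ⟫_ℝ) ⟪u, p τ⟫_ℝ τ := by
    intro τ
    exact (innerSL ℝ u).hasFDerivAt.comp_hasDerivAt τ (hq τ)
  have hpd : ∀ τ, HasDerivAt (fun τ => ⟪u, p τ⟫_ℝ) (-⟪u, gU (q τ)⟫_ℝ) τ := by
    intro τ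
    have := (innerSL ℝ u).hasFDerivAt.comp_hasDerivAt τ (hp τ)
    simpa [inner_neg_right, Function.comp_def] using this
  -- the 2D function
  set F : ℝ → ℝ × ℝ := fun τ => (s * ⟪u, q τ⟫_ℝ, ⟪u, p τ⟫_ℝ) with hF
  set F' : ℝ → ℝ × ℝ := fun τ => (s * ⟪u, p τ⟫_ℝ, -⟪u, gU (q τ)⟫_ℝ) with hF'
  have hFd : ∀ τ, HasDerivAt F (F' τ) τ := fun τ =>
    ((hqd τ).const_mul s).prodMk (hpd τ)
  have hnorm : ∀ x y : ℝ, ‖((x, y) : ℝ × ℝ)‖ = max |x| |y| := by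
    intro x y
    simp [Prod.norm_def, Real.norm_eq_abs]
  have key := norm_le_gronwallBound_of_norm_deriv_right_le
    (f := F) (f' := F') (δ := ‖F 0‖) (K := s) (ε := b) (a := 0) (b := T)
    (fun τ _ => (hFd τ).continuousAt.continuousWithinAt)
    (fun τ _ => (hFd τ).hasDerivWithinAt)
    le_rfl
    (by
      intro τ _
      rw [hnorm, hnorm]
      have h1 : |s * ⟪u, p τ⟫_ℝ| ≤ s * max |s * ⟪u, q τ⟫_ℝ| |⟪u, p τ⟫_ℝ| + b := by
        rw [abs_mul, abs_of_pos hs0]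
        have := le_max_right |s * ⟪u, q τ⟫_ℝ| |⟪u, p τ⟫_ℝ|
        nlinarith
      have h2 : |-⟪u, gU (q τ)⟫_ℝ| ≤ s * max |s * ⟪u, q τ⟫_ℝ| |⟪u, p τ⟫_ℝ| + b := by
        rw [abs_neg]
        refine (hgrad (q τ)).trans ?_
        have hle : |s * ⟪u, q τ⟫_ℝ| ≤ max |s * ⟪u, q τ⟫_ℝ| |⟪u, p τ⟫_ℝ| :=
          le_max_left _ _
        have heq : M * |⟪u, q τ⟫_ℝ| = s * |s * ⟪u, q τ⟫_ℝ| := by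
          rw [abs_mul, abs_of_pos hs0, ← mul_assoc, hsM]
        rw [heq]
        nlinarith
      exact max_le h1 h2)
  have hFt := key t ht
  rw [sub_zero, gronwallBound_of_K_ne_0 hs0.ne'] at hFt
  simp only at hFt
  -- bound on exp
  have hst : s * t ≤ 1/6 := by
    have ht' : t ≤ T := ht.2
    have ht0 : 0 ≤ t := ht.1
    have hT' : T * (6 * s) ≤ 1 := (le_div_iff₀ (by positivity)).mp hT
    nlinarith
  have hexp : Real.exp (s * t) ≤ 3/2 := by
    have h6 : Real.exp (s * t) ≤ Real.exp (1/6) := Real.exp_le_exp.mpr hst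
    refine h6.trans ?_
    have hpow : Real.exp 1 = (Real.exp (1/6 : ℝ))^(6:ℕ) := by
      rw [← Real.exp_nat_mul]; norm_num
    have he : Real.exp 1 < 2.7182818286 := Real.exp_one_lt_d9
    have hp6 : (Real.exp (1/6 : ℝ))^(6:ℕ) ≤ (3/2:ℝ)^(6:ℕ) := by
      rw [← hpow]; nlinarith
    exact le_of_pow_le_pow_left₀ (by norm_num) (by norm_num) hp6
  have hexp1 : (1:ℝ) ≤ Real.exp (s * t) :=
    Real.one_le_exp (mul_nonneg hs0.le ht.1)
  -- final assembly
  have hF0 : ‖F 0‖ ≤ s * |⟪u, q 0⟫_ℝ| + |⟪u, p 0⟫_ℝ| := by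
    rw [hnorm]
    refine max_le ?_ ?_
    · rw [abs_mul, abs_of_pos hs0]
      nlinarith [abs_nonneg ⟪u, p 0⟫_ℝ]
    · nlinarith [abs_nonneg ⟪u, q 0⟫_ℝ, abs_nonneg ⟪u, p 0⟫_ℝ, hs0.le]
  have hpt : |⟪u, p t⟫_ℝ| ≤ ‖F t‖ := by
    rw [hnorm]; exact le_max_right _ _
  have hF0nn : (0:ℝ) ≤ ‖F 0‖ := norm_nonneg _
  have hbs : (0:ℝ) ≤ b / s := by positivity
  have hFt' : ‖F t‖ ≤ (3/2) * ‖F 0‖ + (1/2) * (b / s) := by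
    nlinarith [hFt, hexp, hexp1, hF0nn, hbs]
  have h32 := mul_le_mul_of_nonneg_left hF0 (by norm_num : (0:ℝ) ≤ 3/2)
  have hbseq : (3:ℝ)/2 * b / s = (3/2) * (b / s) := by ring
  have hfin : |⟪u, p t⟫_ℝ| ≤ (3/2) * (s * |⟪u, q 0⟫_ℝ|) + (3/2) * |⟪u, p 0⟫_ℝ| + (3/2) * (b/s) := by
    linarith
  calc |⟪u, p t⟫_ℝ| ≤ (3/2) * (s * |⟪u, q 0⟫_ℝ|) + (3/2) * |⟪u, p 0⟫_ℝ| + (3/2) * (b/s) := hfin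
  _ = 3/2 * s * |⟪u, q 0⟫_ℝ| + 3/2 * |⟪u, p 0⟫_ℝ| + 3/2 * b / s := by ring
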